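/- Let a > 0 and b be real numbers, let r, s > 0 be real numbers, and let c₀ ∈ ℝ. If for every real c ≤ c₀ one has (e^{-(ac+b)} − e^{ac+b}/r)/(e^{-(ac+b)} + 1) = (e^{-c} − e^{c}/s)/(e^{-c} + 1), then a = 1, b = 0, and r = s. -/

import Mathlib

open MeasureTheory Polynomial Filter

/-- The orthogonal polynomials `Q_n^s`: `Q_0 = 1`, `Q_1 = X`,
`X * Q_n = Q_{n+1} + √s * Q_n + Q_{n-1}`. -/
noncomputable def Qpoly (s : ℕ) : ℕ → Polynomial ℝ
  | 0 => 1
  | 1 => Polynomial.X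
  | (n + 2) => Polynomial.X * Qpoly s (n + 1)
      - Polynomial.C (Real.sqrt s) * Qpoly s (n + 1) - Qpoly s n

/-- Chebyshev polynomials of the second kind: `P_0 = 1`, `P_1 = X`,
`X * P_n = P_{n+1} + P_{n-1}`. -/
noncomputable def Ppoly : ℕ → Polynomial ℝ
  | 0 => 1
  | 1 => Polynomial.X
  | (n + 2) => Polynomial.X * Ppoly (n + 1) - Ppoly n

/-- The density of the absolutely continuous part of `ν_s`. -/
noncomputable def nuDensity (s : ℕ) (x : ℝ) : ℝ :=
  Real.sqrt (4 - (x - Real.sqrt s) ^ 2) / (2 * Real.pi * (x * Real.sqrt s + 1))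

/-- The free Meixner measure `ν_s`. -/
noncomputable def nuMeas (s : ℕ) : Measure ℝ :=
  volume.withDensity (fun x => ENNReal.ofReal
      (if |x - Real.sqrt s| ≤ 2 then nuDensity s x else 0))
    + ENNReal.ofReal (1 - 1 / (s : ℝ)) • Measure.dirac (-1 / Real.sqrt s)

/-- The density `f_c`. -/
noncomputable def fc (s : ℕ) (c x : ℝ) : ℝ :=
  (Real.exp c + Real.sqrt s) / (Real.exp c + Real.exp (-c) + Real.sqrt s - x)

/-- The measure `η_c^s = f_c · ν_s + 1_{c<0} ((e^{-c}-e^c)/(e^{-c}+√s)) δ_{e^c+√s+e^{-c}}`. -/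
noncomputable def etaMeas (s : ℕ) (c : ℝ) : Measure ℝ :=
  (nuMeas s).withDensity (fun x => ENNReal.ofReal (fc s c x))
    + (if c < 0 then
        ENNReal.ofReal ((Real.exp (-c) - Real.exp c) / (Real.exp (-c) + Real.sqrt s))
      else 0) • Measure.dirac (Real.exp c + Real.sqrt s + Real.exp (-c))

/-- Total variation distance between two Borel measures on `ℝ`. -/
noncomputable def dTV (μ ν : Measure ℝ) : ℝ :=
  ⨆ A : {A : Set ℝ // MeasurableSet A}, |(μ A.1).toReal - (ν A.1).toReal|

/-- Rigidity of the singular-part profile under affine reparametrization. -/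
theorem stmt11 (a b r s c₀ : ℝ) (ha : 0 < a) (hr : 0 < r) (hs : 0 < s)
    (h : ∀ c : ℝ, c ≤ c₀ →
      (Real.exp (-(a * c + b)) - Real.exp (a * c + b) / r) /
          (Real.exp (-(a * c + b)) + 1) =
        (Real.exp (-c) - Real.exp c / s) / (Real.exp (-c) + 1)) :
    a = 1 ∧ b = 0 ∧ r = s := by
  have key : ∀ c : ℝ, c ≤ c₀ → Real.exp ((a - 1) * c + b) =
      (1 - (Real.exp (a * c + b)) ^ 2 / r + Real.exp c / s
        + Real.exp c * Real.exp (a * c + b) / s) / (1 + Real.exp (a * c + b) / r) := by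
    intro c hc
    have h1 := h c hc
    have hu : (0:ℝ) < Real.exp c := Real.exp_pos _
    have hv : (0:ℝ) < Real.exp (a * c + b) := Real.exp_pos _
    have huv : Real.exp ((a - 1) * c + b) = Real.exp (a * c + b) / Real.exp c := by
      rw [eq_div_iff (ne_of_gt hu), ← Real.exp_add]; ring_nf
    have hne : Real.exp (-(a * c + b)) = (Real.exp (a * c + b))⁻¹ := Real.exp_neg _
    have hne' : Real.exp (-c) = (Real.exp c)⁻¹ := Real.exp_neg _
    rw [hne, hne'] at h1
    rw [huv]
    set u := Real.exp c
    set v := Real.exp (a * c + b)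
    have hd1 : v⁻¹ + 1 > 0 := by positivity
    have hd2 : u⁻¹ + 1 > 0 := by positivity
    field_simp at h1 ⊢
    have huv0 : u * v ≠ 0 := by positivity
    apply mul_left_cancel₀ huv0
    linear_combination (-(u*v)) * h1
  have hlinb : Tendsto (fun c : ℝ => a * c + b) atBot atBot := by
    apply tendsto_atBot_add_const_right
    exact (tendsto_const_mul_atBot_of_pos ha).mpr tendsto_id
  have hu : Tendsto (fun c : ℝ => Real.exp c) atBot (nhds 0) := Real.tendsto_exp_atBot
  have hv : Tendsto (fun c : ℝ => Real.exp (a * c + b)) atBot (nhds 0) :=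
    Real.tendsto_exp_atBot.comp hlinb
  have hR : Tendsto (fun c : ℝ => (1 - (Real.exp (a * c + b)) ^ 2 / r + Real.exp c / s
        + Real.exp c * Real.exp (a * c + b) / s) / (1 + Real.exp (a * c + b) / r))
      atBot (nhds 1) := by
    have := (((tendsto_const_nhds (x := (1:ℝ)).sub (((hv.pow 2)).div_const r)).add
        (hu.div_const s)).add ((hu.mul hv).div_const s)).div
        (tendsto_const_nhds (x := (1:ℝ)).add (hv.div_const r)) (by norm_num)
    convert this using 2 <;> norm_num
  have hL : Tendsto (fun c : ℝ => Real.exp ((a - 1) * c + b)) atBot (nhds 1) := by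
    apply hR.congr'
    filter_upwards [eventually_le_atBot c₀] with c hc
    exact (key c hc).symm
  have ha1 : a = 1 := by
    by_contra hne
    rcases lt_or_gt_of_ne hne with h1 | h1
    · have hT : Tendsto (fun c : ℝ => (a - 1) * c + b) atBot atTop := by
        apply tendsto_atTop_add_const_right
        exact (tendsto_const_mul_atTop_iff_neg tendsto_id).mpr (by linarith)
      exact hL.not_tendsto (disjoint_nhds_atTop 1) (Real.tendsto_exp_atTop.comp hT)
    · have hT : Tendsto (fun c : ℝ => (a - 1) * c + b) atBot atBot := by
        apply tendsto_atBot_add_const_right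
        exact (tendsto_const_mul_atBot_of_pos (by linarith)).mpr tendsto_id
      have := tendsto_nhds_unique hL (Real.tendsto_exp_atBot.comp hT)
      norm_num at this
  subst ha1
  have hb0 : b = 0 := by
    have : Real.exp b = 1 := by
      have : Tendsto (fun _ : ℝ => Real.exp b) atBot (nhds 1) := by
        simpa using hL
      exact tendsto_nhds_unique tendsto_const_nhds this
    exact Real.exp_eq_exp.mp (this.trans Real.exp_zero.symm)
  subst hb0
  refine ⟨rfl, rfl, ?_⟩
  have h1 := h c₀ le_rfl
  simp only [one_mul, add_zero] at h1
  have hu : (0:ℝ) < Real.exp c₀ := Real.exp_pos _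
  have hd : (0:ℝ) < Real.exp (-c₀) + 1 := by positivity
  have h2 : Real.exp (-c₀) - Real.exp c₀ / r = Real.exp (-c₀) - Real.exp c₀ / s := by
    have h3 := (div_eq_div_iff (ne_of_gt hd) (ne_of_gt hd)).mp h1
    exact mul_right_cancel₀ (ne_of_gt hd) h3
  have h4 : Real.exp c₀ / r = Real.exp c₀ / s := by linarith
  field_simp at h4
  nlinarith
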